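/- Let k be a field with char(k) ≠ 2, let Γ be a group, let m ≥ n be natural numbers, let T ∈ Mat(m×n, k[Γ]), and let I ∈ Mat(m×n, k) be a matrix with trivial kernel. Let C₂ = ⟨u⟩ be the cyclic group of order 2 and define S := I·diag_n((1−u)/2) + T·diag_n((1+u)/2) ∈ Mat(m×n, k[Γ×C₂]), where diag_n(x) is the n×n diagonal matrix with diagonal entries x. Then for every finite subset Φ ⊆ Γ one has dim_k ker(S_{Φ×C₂}) = dim_k ker(T_Φ). Consequently, for any Følner sequence (Φ_i) in Γ along which the kernel gradient of T exists and equals d, the kernel gradient of S along the Følner sequence (Φ_i×C₂) of Γ×C₂ exists and equals d/2. -/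

import Mathlib

open scoped Pointwise

/-- A Følner sequence. -/
def IsFolnerSeq {Λ : Type*} [Group Λ] (Φ : ℕ → Finset Λ) : Prop :=
  letI := Classical.decEq Λ
  (∀ i, (Φ i).Nonempty) ∧
    ∀ S : Finset Λ, Filter.Tendsto
      (fun i => ((((S ×ˢ Φ i).image fun p => p.1 * p.2) \ Φ i).card : ℝ) / ((Φ i).card : ℝ))
        Filter.atTop (nhds 0)

variable {k : Type*} [Field k] {Λ : Type*} [Group Λ]

/-- inclusion of k[Φ] into k[Λ] -/
noncomputable def spanIncl (Φ : Finset Λ) : (↥Φ → k) →ₗ[k] MonoidAlgebra k Λ where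
  toFun f := ∑ x : Φ, f x • MonoidAlgebra.single (x : Λ) (1 : k)
  map_add' f g := by simp [add_smul, Finset.sum_add_distrib]
  map_smul' c f := by simp [smul_smul, Finset.smul_sum]

/-- projection of k[Λ] onto k[Φ] -/
noncomputable def spanProj (Φ : Finset Λ) : MonoidAlgebra k Λ →ₗ[k] (↥Φ → k) where
  toFun f x := f.coeff (x : Λ)
  map_add' f g := by ext x; exact Finsupp.add_apply f.coeff g.coeff x
  map_smul' c f := by ext x; exact Finsupp.smul_apply c f.coeff x

/-- compression of a matrix over k[Λ] to a finite subset Φ -/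
noncomputable def compress {ι κ : Type*} [Fintype ι] [Fintype κ]
    (T : Matrix ι κ (MonoidAlgebra k Λ)) (Φ : Finset Λ) :
    (κ → (↥Φ → k)) →ₗ[k] (ι → (↥Φ → k)) :=
  LinearMap.pi fun i => (spanProj Φ).comp <|
    ∑ j : κ, (LinearMap.mulLeft k (T i j)).comp ((spanIncl Φ).comp (LinearMap.proj j))

/-- the kernel gradient of `T` along `Φ` exists and equals `r`. -/
noncomputable def HasKernelGradient {ι κ : Type*} [Fintype ι] [Fintype κ]
    (T : Matrix ι κ (MonoidAlgebra k Λ)) (Φ : ℕ → Finset Λ) (r : ℝ) : Prop :=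
  Filter.Tendsto
    (fun i => (Module.finrank k (LinearMap.ker (compress T (Φ i))) : ℝ) / ((Φ i).card : ℝ))
    Filter.atTop (nhds r)

abbrev C₂ : Type := Multiplicative (ZMod 2)

/-- the generator `u` of the cyclic group of order 2 -/
def ugen : C₂ := Multiplicative.ofAdd (1 : ZMod 2)

/-! ### Auxiliary lemmas -/

lemma C2_cases (c : C₂) : c = 1 ∨ c = ugen := by revert c; decide
lemma ugen_ne_one : (ugen : C₂) ≠ 1 := by decide
lemma ugen_mul_ugen : ugen * ugen = (1 : C₂) := by decide

open scoped Classical in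
lemma spanIncl_apply (Φ : Finset Λ) (f : ↥Φ → k) (a : Λ) :
    (spanIncl Φ f).coeff a = if h : a ∈ Φ then f ⟨a, h⟩ else 0 := by
  classical
  show (∑ x : ↥Φ, f x • MonoidAlgebra.single (x : Λ) (1 : k)).coeff a = _
  rw [MonoidAlgebra.coeff_sum, Finsupp.finset_sum_apply]
  simp only [MonoidAlgebra.smul_single', mul_one, MonoidAlgebra.single_apply]
  by_cases h : a ∈ Φ
  · rw [dif_pos h]
    rw [show (fun x : ↥Φ => if (x:Λ) = a then f x else 0)
        = fun x : ↥Φ => if x = ⟨a, h⟩ then f x else 0 from ?_]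
    · exact (Finset.sum_ite_eq' _ _ _).trans (by simp)
    · funext x
      congr 1
      simp [Subtype.ext_iff]
  · rw [dif_neg h, Finset.sum_eq_zero]
    intro x _
    rw [if_neg]
    intro hx; exact h (hx ▸ x.2)

lemma compress_apply {ι κ : Type*} [Fintype ι] [Fintype κ]
    (T : Matrix ι κ (MonoidAlgebra k Λ)) (Φ : Finset Λ) (v : κ → (↥Φ → k)) (i : ι) (x : ↥Φ) :
    compress T Φ v i x = ∑ j, (T i j * spanIncl Φ (v j)).coeff (x : Λ) := by
  show spanProj Φ ((∑ j : κ, (LinearMap.mulLeft k (T i j)).comp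
      ((spanIncl Φ).comp (LinearMap.proj j))) v) x = _
  rw [LinearMap.sum_apply]
  show (∑ j : κ, T i j * spanIncl Φ (v j)).coeff (x : Λ) = _
  rw [MonoidAlgebra.coeff_sum, Finsupp.finset_sum_apply]

lemma mul_spanIncl_apply (Φ : Finset Λ) (g : MonoidAlgebra k Λ) (f : ↥Φ → k) (y : Λ) :
    (g * spanIncl Φ f).coeff y = ∑ x : ↥Φ, g.coeff (y * (↑x)⁻¹) * f x := by
  show (g * ∑ x : ↥Φ, f x • MonoidAlgebra.single (x : Λ) (1 : k)).coeff y = _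
  rw [Finset.mul_sum, MonoidAlgebra.coeff_sum, Finsupp.finset_sum_apply]
  congr 1
  funext x
  rw [mul_smul_comm, MonoidAlgebra.coeff_smul_apply, MonoidAlgebra.mul_single_apply, mul_one,
    smul_eq_mul, mul_comm]

variable {Γ : Type*} [Group Γ]

def emb (Φ : Finset Γ) (x : ↥Φ) (c : C₂) : ↥(Φ ×ˢ (Finset.univ : Finset C₂)) :=
  ⟨((x : Γ), c), Finset.mem_product.mpr ⟨x.2, Finset.mem_univ c⟩⟩

def prodEquiv (Φ : Finset Γ) : ↥Φ × C₂ ≃ ↥(Φ ×ˢ (Finset.univ : Finset C₂)) where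
  toFun p := emb Φ p.1 p.2
  invFun q := (⟨q.1.1, (Finset.mem_product.mp q.2).1⟩, q.1.2)
  left_inv _ := rfl
  right_inv _ := Subtype.ext rfl

noncomputable def iotaC (g : MonoidAlgebra k Γ) : MonoidAlgebra k (Γ × C₂) :=
  MonoidAlgebra.mapDomain (fun g : Γ => (g, (1 : C₂))) g

omit [Group Γ] in
lemma iota_apply (g : MonoidAlgebra k Γ) (a : Γ) (b : C₂) :
    (iotaC g).coeff (a, b) = if b = 1 then g.coeff a else 0 := by
  show (Finsupp.mapDomain (fun g : Γ => (g, (1 : C₂))) g.coeff) (a, b) = _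
  by_cases hb : b = 1
  · subst hb
    rw [if_pos rfl]
    exact Finsupp.mapDomain_apply (fun x y h => congrArg Prod.fst h) g.coeff a
  · rw [if_neg hb]
    refine Finsupp.mapDomain_notin_range _ _ (fun ⟨z, hz⟩ => hb ?_)
    exact (congrArg Prod.snd hz).symm

lemma u_mul_apply (w : MonoidAlgebra k (Γ × C₂)) (y : Γ) (c : C₂) :
    (MonoidAlgebra.single ((1:Γ), ugen) (1:k) * w).coeff (y, c) = w.coeff (y, ugen * c) := by
  rw [MonoidAlgebra.single_mul_apply, one_mul]
  congr 1
  show ((1:Γ), ugen)⁻¹ * (y, c) = (y, ugen * c)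
  have : (ugen : C₂)⁻¹ = ugen := by decide
  simp [Prod.ext_iff, this]

lemma iota_mul_apply (Φ : Finset Γ) (g : MonoidAlgebra k Γ)
    (f : ↥(Φ ×ˢ (Finset.univ : Finset C₂)) → k) (y : Γ) (c : C₂) :
    (iotaC g * spanIncl (Φ ×ˢ (Finset.univ : Finset C₂)) f).coeff (y, c)
      = (g * spanIncl Φ (fun z => f (emb Φ z c))).coeff y := by
  classical
  rw [mul_spanIncl_apply, mul_spanIncl_apply]
  rw [← Equiv.sum_comp (prodEquiv Φ)
    (fun q => (iotaC g).coeff (((y,c) : Γ × C₂) * (↑q)⁻¹) * f q)]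
  rw [Fintype.sum_prod_type]
  congr 1
  funext z
  have h1 : ∀ c' : C₂,
      ((y, c) * ((prodEquiv Φ (z, c') : ↥(Φ ×ˢ (Finset.univ : Finset C₂))) : Γ × C₂)⁻¹)
      = (y * (z : Γ)⁻¹, c * c'⁻¹) := fun c' => rfl
  simp only [h1, iota_apply, ite_mul, zero_mul]
  have h2 : ∀ c' : C₂, (c * c'⁻¹ = 1) = (c' = c) := by
    intro c'
    simp [mul_inv_eq_one, eq_comm]
  simp only [h2]
  rw [Finset.sum_ite_eq' Finset.univ c
    (fun x => g.coeff (y * (↑z)⁻¹) * f ((prodEquiv Φ) (z, x)))]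
  simp only [Finset.mem_univ, if_true]
  rfl

lemma u_comm (h : MonoidAlgebra k (Γ × C₂)) :
    MonoidAlgebra.single ((1:Γ), ugen) (1:k) * h
      = h * MonoidAlgebra.single ((1:Γ), ugen) (1:k) := by
  ext p
  obtain ⟨y, c⟩ := p
  rw [u_mul_apply, MonoidAlgebra.mul_single_apply, mul_one]
  congr 1
  show (y, ugen * c) = (y * 1⁻¹, c * ugen⁻¹)
  have h1 : (ugen : C₂)⁻¹ = ugen := by decide
  have h2 : ugen * c = c * ugen := mul_comm _ _
  simp [h1, h2]

lemma iota_mul_u_apply (Φ : Finset Γ) (a : MonoidAlgebra k Γ)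
    (f : ↥(Φ ×ˢ (Finset.univ : Finset C₂)) → k) (y : Γ) (c : C₂) :
    (iotaC a * (MonoidAlgebra.single ((1:Γ), ugen) (1:k)
        * spanIncl (Φ ×ˢ (Finset.univ : Finset C₂)) f)).coeff (y, c)
      = (a * spanIncl Φ (fun z => f (emb Φ z (ugen * c)))).coeff y := by
  rw [u_comm, ← mul_assoc, ← u_comm, u_mul_apply, iota_mul_apply]

lemma term_eq (Φ : Finset Γ) (a : MonoidAlgebra k Γ) (r : k)
    (f : ↥(Φ ×ˢ (Finset.univ : Finset C₂)) → k) (x : ↥Φ) (c : C₂) :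
    ((MonoidAlgebra.single (1 : Γ × C₂) r *
        ((2:k)⁻¹ • ((1 : MonoidAlgebra k (Γ × C₂)) - MonoidAlgebra.single ((1:Γ), ugen) (1:k))) +
      iotaC a *
        ((2:k)⁻¹ • ((1 : MonoidAlgebra k (Γ × C₂)) + MonoidAlgebra.single ((1:Γ), ugen) (1:k))))
       * spanIncl (Φ ×ˢ (Finset.univ : Finset C₂)) f).coeff ((x : Γ), c)
    = (if c = 1 then 1 else -1) * ((2:k)⁻¹ * (r * (f (emb Φ x 1) - f (emb Φ x ugen))))
      + (2:k)⁻¹ * ((a * spanIncl Φ (fun z => f (emb Φ z 1) + f (emb Φ z ugen))).coeff (x : Γ)) := by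
  classical
  set w : MonoidAlgebra k (Γ × C₂) := spanIncl (Φ ×ˢ (Finset.univ : Finset C₂)) f with hw
  rw [add_mul, MonoidAlgebra.coeff_add, Finsupp.add_apply]
  have e1 : (MonoidAlgebra.single (1 : Γ × C₂) r
        * ((2:k)⁻¹ • (1 - MonoidAlgebra.single ((1:Γ), ugen) (1:k))) * w).coeff ((x : Γ), c)
      = r * ((2:k)⁻¹ * (w.coeff ((x:Γ), c) - w.coeff ((x:Γ), ugen * c))) := by
    rw [mul_assoc, MonoidAlgebra.single_mul_apply, inv_one, one_mul, smul_mul_assoc, sub_mul,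
      one_mul, MonoidAlgebra.coeff_smul_apply, MonoidAlgebra.coeff_sub, Finsupp.sub_apply,
      u_mul_apply, smul_eq_mul]
  have e2 : (iotaC a * ((2:k)⁻¹ • (1 + MonoidAlgebra.single ((1:Γ), ugen) (1:k))) * w).coeff ((x:Γ), c)
      = (2:k)⁻¹ * ((a * spanIncl Φ (fun z => f (emb Φ z c))).coeff (x:Γ)
          + (a * spanIncl Φ (fun z => f (emb Φ z (ugen * c)))).coeff (x:Γ)) := by
    rw [mul_assoc, smul_mul_assoc, add_mul, one_mul, mul_smul_comm, mul_add,
      MonoidAlgebra.coeff_smul_apply, MonoidAlgebra.coeff_add, Finsupp.add_apply, smul_eq_mul, hw, iota_mul_apply, iota_mul_u_apply]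
  rw [e1, e2]
  have hwc : ∀ c' : C₂, w.coeff ((x:Γ), c') = f (emb Φ x c') := by
    intro c'
    rw [hw, spanIncl_apply, dif_pos (Finset.mem_product.mpr ⟨x.2, Finset.mem_univ c'⟩)]
    rfl
  have hsum : ∀ c₁ c₂ : C₂, (a * spanIncl Φ (fun z => f (emb Φ z c₁))).coeff (x:Γ)
        + (a * spanIncl Φ (fun z => f (emb Φ z c₂))).coeff (x:Γ)
        = (a * spanIncl Φ ((fun z => f (emb Φ z c₁)) + (fun z => f (emb Φ z c₂)))).coeff (x:Γ) := by
    intro c₁ c₂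
    rw [map_add, mul_add, MonoidAlgebra.coeff_add, Finsupp.add_apply]
  rcases C2_cases c with h | h <;> subst h
  · rw [if_pos rfl, hwc, hwc, mul_one, hsum]
    ring_nf
    rfl
  · rw [if_neg ugen_ne_one, hwc, hwc, ugen_mul_ugen, hsum]
    have : ((fun z => f (emb Φ z ugen)) + fun z => f (emb Φ z 1))
        = ((fun z => f (emb Φ z 1)) + fun z => f (emb Φ z ugen)) := add_comm _ _
    rw [this]
    ring_nf
    rfl

section Key

variable {m n : ℕ} (T : Matrix (Fin m) (Fin n) (MonoidAlgebra k Γ))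
  (I : Matrix (Fin m) (Fin n) k) (S : Matrix (Fin m) (Fin n) (MonoidAlgebra k (Γ × C₂)))

lemma compressS_apply
    (hS : S =
      (I.map fun c => MonoidAlgebra.single (1 : Γ × C₂) c) *
          Matrix.diagonal (fun _ : Fin n =>
            (2 : k)⁻¹ • ((1 : MonoidAlgebra k (Γ × C₂)) -
              MonoidAlgebra.single ((1 : Γ), ugen) (1 : k))) +
        (T.map (fun f => MonoidAlgebra.mapDomain (fun g : Γ => (g, (1 : C₂))) f) :
            Matrix (Fin m) (Fin n) (MonoidAlgebra k (Γ × C₂))) *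
          Matrix.diagonal (fun _ : Fin n =>
            (2 : k)⁻¹ • ((1 : MonoidAlgebra k (Γ × C₂)) +
              MonoidAlgebra.single ((1 : Γ), ugen) (1 : k))))
    (Φ : Finset Γ) (v : Fin n → (↥(Φ ×ˢ (Finset.univ : Finset C₂)) → k))
    (i : Fin m) (x : ↥Φ) (c : C₂) :
    compress S (Φ ×ˢ (Finset.univ : Finset C₂)) v i (emb Φ x c) =
      (if c = 1 then 1 else -1) *
          ((2:k)⁻¹ * ∑ j, I i j * (v j (emb Φ x 1) - v j (emb Φ x ugen)))
        + (2:k)⁻¹ * compress T Φ (fun j z => v j (emb Φ z 1) + v j (emb Φ z ugen)) i x := by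
  classical
  rw [compress_apply, compress_apply]
  have hSij : ∀ j, S i j =
      MonoidAlgebra.single (1 : Γ × C₂) (I i j) *
        ((2:k)⁻¹ • ((1 : MonoidAlgebra k (Γ × C₂)) - MonoidAlgebra.single ((1:Γ), ugen) (1:k))) +
      iotaC (T i j) *
        ((2:k)⁻¹ • ((1 : MonoidAlgebra k (Γ × C₂)) + MonoidAlgebra.single ((1:Γ), ugen) (1:k))) := by
    intro j
    rw [hS]
    rw [Matrix.add_apply, Matrix.mul_diagonal, Matrix.mul_diagonal, Matrix.map_apply,
      Matrix.map_apply]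
    rfl
  have hterm : ∀ j, (S i j * spanIncl (Φ ×ˢ (Finset.univ : Finset C₂)) (v j)).coeff
        ((emb Φ x c : Γ × C₂))
      = (if c = 1 then 1 else -1) * ((2:k)⁻¹ * (I i j * (v j (emb Φ x 1) - v j (emb Φ x ugen))))
        + (2:k)⁻¹ * ((T i j * spanIncl Φ (fun z => v j (emb Φ z 1) + v j (emb Φ z ugen))).coeff (x:Γ)) := by
    intro j
    rw [hSij j]
    exact term_eq Φ (T i j) (I i j) (v j) x c
  rw [Finset.sum_congr rfl (fun j _ => hterm j), Finset.sum_add_distrib,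
    ← Finset.mul_sum, ← Finset.mul_sum, ← Finset.mul_sum]

lemma mem_kerS_iff (h2 : (2:k) ≠ 0)
    (hS : S =
      (I.map fun c => MonoidAlgebra.single (1 : Γ × C₂) c) *
          Matrix.diagonal (fun _ : Fin n =>
            (2 : k)⁻¹ • ((1 : MonoidAlgebra k (Γ × C₂)) -
              MonoidAlgebra.single ((1 : Γ), ugen) (1 : k))) +
        (T.map (fun f => MonoidAlgebra.mapDomain (fun g : Γ => (g, (1 : C₂))) f) :
            Matrix (Fin m) (Fin n) (MonoidAlgebra k (Γ × C₂))) *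
          Matrix.diagonal (fun _ : Fin n =>
            (2 : k)⁻¹ • ((1 : MonoidAlgebra k (Γ × C₂)) +
              MonoidAlgebra.single ((1 : Γ), ugen) (1 : k))))
    (Φ : Finset Γ) (v : Fin n → (↥(Φ ×ˢ (Finset.univ : Finset C₂)) → k)) :
    compress S (Φ ×ˢ (Finset.univ : Finset C₂)) v = 0 ↔
      (∀ (i : Fin m) (x : ↥Φ), ∑ j, I i j * (v j (emb Φ x 1) - v j (emb Φ x ugen)) = 0) ∧
        compress T Φ (fun j z => v j (emb Φ z 1) + v j (emb Φ z ugen)) = 0 := by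
  constructor
  · intro h
    have hpt : ∀ (i : Fin m) (x : ↥Φ) (c : C₂),
        compress S (Φ ×ˢ (Finset.univ : Finset C₂)) v i (emb Φ x c) = 0 := by
      intro i x c; rw [h]; rfl
    have hAB : ∀ (i : Fin m) (x : ↥Φ),
        (∑ j, I i j * (v j (emb Φ x 1) - v j (emb Φ x ugen))) = 0 ∧
        compress T Φ (fun j z => v j (emb Φ z 1) + v j (emb Φ z ugen)) i x = 0 := by
      intro i x
      have e1 := hpt i x 1
      have e2 := hpt i x ugen
      rw [compressS_apply T I S hS, if_pos rfl] at e1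
      rw [compressS_apply T I S hS, if_neg ugen_ne_one] at e2
      set A := ∑ j, I i j * (v j (emb Φ x 1) - v j (emb Φ x ugen)) with hA
      set B := compress T Φ (fun j z => v j (emb Φ z 1) + v j (emb Φ z ugen)) i x with hB
      constructor
      · have h4 : (2:k)⁻¹ * A + (2:k)⁻¹ * A = 0 := by linear_combination e1 - e2
        have h5 : (2:k)⁻¹ * (A + A) = 0 := by linear_combination h4
        rcases mul_eq_zero.mp h5 with h6 | h6
        · exact absurd h6 (inv_ne_zero h2)
        · have : (2:k) * A = 0 := by linear_combination h6
          rcases mul_eq_zero.mp this with h7 | h7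
          · exact absurd h7 h2
          · exact h7
      · have h4 : (2:k)⁻¹ * B + (2:k)⁻¹ * B = 0 := by linear_combination e1 + e2
        have h5 : (2:k)⁻¹ * (B + B) = 0 := by linear_combination h4
        rcases mul_eq_zero.mp h5 with h6 | h6
        · exact absurd h6 (inv_ne_zero h2)
        · have : (2:k) * B = 0 := by linear_combination h6
          rcases mul_eq_zero.mp this with h7 | h7
          · exact absurd h7 h2
          · exact h7
    refine ⟨fun i x => (hAB i x).1, ?_⟩
    funext i x
    exact (hAB i x).2
  · rintro ⟨hA, hB⟩
    funext i q
    have hq : q = emb Φ ⟨q.1.1, (Finset.mem_product.mp q.2).1⟩ q.1.2 :=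
      Subtype.ext (Prod.ext rfl rfl)
    rw [hq, compressS_apply T I S hS, hA, hB]
    simp

lemma finrank_kerS (h2 : (2:k) ≠ 0) (hI : LinearMap.ker I.mulVecLin = ⊥)
    (hS : S =
      (I.map fun c => MonoidAlgebra.single (1 : Γ × C₂) c) *
          Matrix.diagonal (fun _ : Fin n =>
            (2 : k)⁻¹ • ((1 : MonoidAlgebra k (Γ × C₂)) -
              MonoidAlgebra.single ((1 : Γ), ugen) (1 : k))) +
        (T.map (fun f => MonoidAlgebra.mapDomain (fun g : Γ => (g, (1 : C₂))) f) :
            Matrix (Fin m) (Fin n) (MonoidAlgebra k (Γ × C₂))) *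
          Matrix.diagonal (fun _ : Fin n =>
            (2 : k)⁻¹ • ((1 : MonoidAlgebra k (Γ × C₂)) +
              MonoidAlgebra.single ((1 : Γ), ugen) (1 : k))))
    (Φ : Finset Γ) :
    Module.finrank k (LinearMap.ker (compress S (Φ ×ˢ (Finset.univ : Finset C₂)))) =
      Module.finrank k (LinearMap.ker (compress T Φ)) := by
  classical
  -- from the first condition of `mem_kerS_iff` and injectivity of I we get gm = 0
  have hGM : ∀ v : Fin n → (↥(Φ ×ˢ (Finset.univ : Finset C₂)) → k),
      (∀ (i : Fin m) (x : ↥Φ), ∑ j, I i j * (v j (emb Φ x 1) - v j (emb Φ x ugen)) = 0) →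
      ∀ (j : Fin n) (x : ↥Φ), v j (emb Φ x 1) = v j (emb Φ x ugen) := by
    intro v hA j x
    have hz : I.mulVecLin (fun j => v j (emb Φ x 1) - v j (emb Φ x ugen)) = 0 := by
      funext i
      show I.mulVec _ i = 0
      rw [Matrix.mulVec, dotProduct]
      exact hA i x
    have : (fun j => v j (emb Φ x 1) - v j (emb Φ x ugen)) = 0 := by
      have hmem : (fun j => v j (emb Φ x 1) - v j (emb Φ x ugen)) ∈
          LinearMap.ker I.mulVecLin := LinearMap.mem_ker.mpr hz
      rw [hI] at hmem
      exact hmem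
    have := congrFun this j
    exact sub_eq_zero.mp this
  -- the "plus part" linear map
  let P : (Fin n → (↥(Φ ×ˢ (Finset.univ : Finset C₂)) → k)) →ₗ[k] (Fin n → (↥Φ → k)) :=
    { toFun := fun v j z => v j (emb Φ z 1) + v j (emb Φ z ugen)
      map_add' := by intro a b; funext j z; simp [Pi.add_apply]; ring
      map_smul' := by intro c a; funext j z; simp [Pi.smul_apply, smul_eq_mul]; ring }
  have hPmem : ∀ v ∈ LinearMap.ker (compress S (Φ ×ˢ (Finset.univ : Finset C₂))),
      P v ∈ LinearMap.ker (compress T Φ) := by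
    intro v hv
    exact LinearMap.mem_ker.mpr ((mem_kerS_iff T I S h2 hS Φ v).mp (LinearMap.mem_ker.mp hv)).2
  let K : ↥(LinearMap.ker (compress S (Φ ×ˢ (Finset.univ : Finset C₂)))) →ₗ[k]
      ↥(LinearMap.ker (compress T Φ)) :=
    (P.comp (LinearMap.ker (compress S (Φ ×ˢ (Finset.univ : Finset C₂)))).subtype).codRestrict
      (LinearMap.ker (compress T Φ)) (fun v => hPmem v.1 v.2)
  have hinj : Function.Injective K := by
    intro v w hvw
    have h0 : P (v.1 - w.1) = 0 := by
      have := congrArg Subtype.val hvw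
      have h1 : P v.1 = P w.1 := this
      rw [map_sub, h1, sub_self]
    have hker : (v.1 - w.1) ∈ LinearMap.ker (compress S (Φ ×ˢ (Finset.univ : Finset C₂))) :=
      Submodule.sub_mem _ v.2 w.2
    have hiff := (mem_kerS_iff T I S h2 hS Φ (v.1 - w.1)).mp (LinearMap.mem_ker.mp hker)
    have hgm := hGM _ hiff.1
    have hzero : v.1 - w.1 = 0 := by
      funext j q
      have hq : q = emb Φ ⟨q.1.1, (Finset.mem_product.mp q.2).1⟩ q.1.2 :=
        Subtype.ext (Prod.ext rfl rfl)
      set u := v.1 - w.1 with hu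
      set x : ↥Φ := ⟨q.1.1, (Finset.mem_product.mp q.2).1⟩ with hx
      have hgp : u j (emb Φ x 1) + u j (emb Φ x ugen) = 0 := congrFun (congrFun h0 j) x
      have hgm' : u j (emb Φ x 1) = u j (emb Φ x ugen) := hgm j x
      have h2v : u j (emb Φ x 1) = 0 := by
        have : u j (emb Φ x 1) + u j (emb Φ x 1) = 0 := by rw [hgm'] at hgp ⊢; exact hgp
        have h4 : (2:k) * u j (emb Φ x 1) = 0 := by linear_combination this
        rcases mul_eq_zero.mp h4 with h5 | h5
        · exact absurd h5 h2
        · exact h5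
      show u j q = 0
      rw [hq]
      rcases C2_cases q.1.2 with h | h <;> rw [h]
      · exact h2v
      · rw [← hgm']; exact h2v
    have : v.1 = w.1 := by
      have := sub_eq_zero.mp hzero
      exact this
    exact Subtype.ext this
  have hsurj : Function.Surjective K := by
    rintro ⟨w, hw⟩
    let v : Fin n → (↥(Φ ×ˢ (Finset.univ : Finset C₂)) → k) :=
      fun j q => (2:k)⁻¹ * w j ⟨q.1.1, (Finset.mem_product.mp q.2).1⟩
    have hhalf : (2:k)⁻¹ + (2:k)⁻¹ = 1 := by
      rw [← two_mul, mul_inv_cancel₀ h2]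
    have hPv : P v = w := by
      funext j z
      show (2:k)⁻¹ * w j z + (2:k)⁻¹ * w j z = w j z
      rw [← add_mul, hhalf, one_mul]
    have hv : v ∈ LinearMap.ker (compress S (Φ ×ˢ (Finset.univ : Finset C₂))) := by
      refine LinearMap.mem_ker.mpr ((mem_kerS_iff T I S h2 hS Φ v).mpr ⟨?_, ?_⟩)
      · intro i x
        have : ∀ j, v j (emb Φ x 1) - v j (emb Φ x ugen) = 0 := fun j => sub_self _
        simp only [this, mul_zero, Finset.sum_const_zero]
      · have : (fun j z => v j (emb Φ z 1) + v j (emb Φ z ugen)) = w := hPv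
        rw [this]
        exact LinearMap.mem_ker.mp hw
    exact ⟨⟨v, hv⟩, Subtype.ext hPv⟩
  exact (LinearEquiv.ofBijective K ⟨hinj, hsurj⟩).finrank_eq

end Key

/-- STATEMENT 11: with `S := I·diag_n((1−u)/2) + T·diag_n((1+u)/2)` over `k[Γ×C₂]`, one has
`dim_k ker(S_{Φ×C₂}) = dim_k ker(T_Φ)` for all finite `Φ ⊆ Γ`; consequently, if the kernel
gradient of `T` along a Følner sequence `(Φ_i)` equals `d`, then `(Φ_i × C₂)` is a Følner
sequence of `Γ×C₂` along which the kernel gradient of `S` equals `d/2`. -/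
theorem statement11 (k : Type) [Field k] (hchar : ringChar k ≠ 2) (Γ : Type) [Group Γ]
    (m n : ℕ) (hmn : n ≤ m) (T : Matrix (Fin m) (Fin n) (MonoidAlgebra k Γ))
    (I : Matrix (Fin m) (Fin n) k) (hI : LinearMap.ker I.mulVecLin = ⊥)
    (S : Matrix (Fin m) (Fin n) (MonoidAlgebra k (Γ × C₂)))
    (hS : S =
      (I.map fun c => MonoidAlgebra.single (1 : Γ × C₂) c) *
          Matrix.diagonal (fun _ : Fin n =>
            (2 : k)⁻¹ • ((1 : MonoidAlgebra k (Γ × C₂)) -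
              MonoidAlgebra.single ((1 : Γ), ugen) (1 : k))) +
        (T.map (fun f => MonoidAlgebra.mapDomain (fun g : Γ => (g, (1 : C₂))) f) :
            Matrix (Fin m) (Fin n) (MonoidAlgebra k (Γ × C₂))) *
          Matrix.diagonal (fun _ : Fin n =>
            (2 : k)⁻¹ • ((1 : MonoidAlgebra k (Γ × C₂)) +
              MonoidAlgebra.single ((1 : Γ), ugen) (1 : k)))) :
    (∀ Φ : Finset Γ,
      Module.finrank k (LinearMap.ker (compress S (Φ ×ˢ (Finset.univ : Finset C₂)))) =
        Module.finrank k (LinearMap.ker (compress T Φ))) ∧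
    ∀ (Φ : ℕ → Finset Γ) (d : ℝ), IsFolnerSeq Φ → HasKernelGradient T Φ d →
      IsFolnerSeq (fun i => Φ i ×ˢ (Finset.univ : Finset C₂)) ∧
        HasKernelGradient S (fun i => Φ i ×ˢ (Finset.univ : Finset C₂)) (d / 2) := by
  classical
  have h2 : (2:k) ≠ 0 := Ring.two_ne_zero hchar
  have hpart1 : ∀ Φ : Finset Γ,
      Module.finrank k (LinearMap.ker (compress S (Φ ×ˢ (Finset.univ : Finset C₂)))) =
        Module.finrank k (LinearMap.ker (compress T Φ)) :=
    fun Φ => finrank_kerS T I S h2 hI hS Φ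
  have hcard2 : (Finset.univ : Finset C₂).card = 2 := by decide
  refine ⟨hpart1, ?_⟩
  intro Φ d hF hKG
  obtain ⟨hne, hconv⟩ := hF
  constructor
  · refine ⟨fun i => (hne i).product Finset.univ_nonempty, ?_⟩
    intro Sf
    letI : DecidableEq Γ := Classical.decEq Γ
    letI : DecidableEq (Γ × C₂) := Classical.decEq (Γ × C₂)
    set S₁ : Finset Γ := Sf.image Prod.fst with hS₁
    refine squeeze_zero (fun i => div_nonneg (Nat.cast_nonneg _) (Nat.cast_nonneg _))
      (fun i => ?_) (hconv S₁)
    dsimp only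
    have hsub : ((Sf ×ˢ (Φ i ×ˢ (Finset.univ : Finset C₂))).image fun p => p.1 * p.2)
          \ (Φ i ×ˢ (Finset.univ : Finset C₂))
        ⊆ (((S₁ ×ˢ Φ i).image fun p => p.1 * p.2) \ Φ i) ×ˢ (Finset.univ : Finset C₂) := by
      intro a ha
      rw [Finset.mem_sdiff] at ha
      obtain ⟨him, hnot⟩ := ha
      rw [Finset.mem_image] at him
      obtain ⟨p, hp, hpa⟩ := him
      rw [Finset.mem_product] at hp
      obtain ⟨hp1, hp2⟩ := hp
      rw [Finset.mem_product] at hp2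
      rw [Finset.mem_product]
      refine ⟨?_, Finset.mem_univ _⟩
      rw [Finset.mem_sdiff]
      constructor
      · rw [Finset.mem_image]
        refine ⟨(p.1.1, p.2.1), ?_, ?_⟩
        · rw [Finset.mem_product]
          exact ⟨Finset.mem_image.mpr ⟨p.1, hp1, rfl⟩, hp2.1⟩
        · rw [← hpa]
          rfl
      · intro hmem
        exact hnot (Finset.mem_product.mpr ⟨hmem, Finset.mem_univ _⟩)
    have hDle : ((((Sf ×ˢ (Φ i ×ˢ (Finset.univ : Finset C₂))).image fun p => p.1 * p.2)
          \ (Φ i ×ˢ (Finset.univ : Finset C₂))).card : ℝ)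
        ≤ ((((S₁ ×ˢ Φ i).image fun p => p.1 * p.2) \ Φ i).card : ℝ) * 2 := by
      have h3 := Finset.card_le_card hsub
      rw [Finset.card_product, hcard2] at h3
      exact_mod_cast h3
    have hcP : ((Φ i ×ˢ (Finset.univ : Finset C₂)).card : ℝ) = ((Φ i).card : ℝ) * 2 := by
      rw [Finset.card_product, hcard2]
      push_cast
      ring
    have hpos : (0:ℝ) < ((Φ i).card : ℝ) := by exact_mod_cast (hne i).card_pos
    rw [hcP]
    calc ((((Sf ×ˢ (Φ i ×ˢ (Finset.univ : Finset C₂))).image fun p => p.1 * p.2)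
          \ (Φ i ×ˢ (Finset.univ : Finset C₂))).card : ℝ) / (((Φ i).card : ℝ) * 2)
        ≤ (((((S₁ ×ˢ Φ i).image fun p => p.1 * p.2) \ Φ i).card : ℝ) * 2)
            / (((Φ i).card : ℝ) * 2) := by
          apply div_le_div_of_nonneg_right hDle
          positivity
      _ = ((((S₁ ×ˢ Φ i).image fun p => p.1 * p.2) \ Φ i).card : ℝ) / ((Φ i).card : ℝ) :=
          mul_div_mul_right _ _ two_ne_zero
  · refine Filter.Tendsto.congr (fun i => ?_) (hKG.div_const (2:ℝ))
    rw [hpart1 (Φ i), Finset.card_product, hcard2]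
    push_cast
    rw [div_div]
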